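/- Under the logarithmic capacity functions C_u(x) = (1/c(u))·(−log(1 − ((x − h(u)) mod 1))) with node positions i.i.d. uniform on [0,1) and a data element hashed uniformly to [0,1), the probability that the data element is assigned to node u equals c(u)/Σ_{v∈V} c(v). Hence the expected fraction of data stored at u is proportional to its capacity. -/

import Mathlib

open MeasureTheory Set

lemma map_fract_const_sub (x : ℝ) :
    Measure.map (fun t : ℝ => Int.fract (x - t)) (volume.restrict (Set.Ico (0:ℝ) 1)) =
      volume.restrict (Set.Ico (0:ℝ) 1) := by
  have hfr : (fun t : ℝ => Int.fract (x - t)) = fun t : ℝ => Int.fract (Int.fract x - t) := by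
    funext t
    have h : Int.fract x - t = x - t - (⌊x⌋ : ℤ) := by
      have := Int.fract_add_floor x
      push_cast
      push_cast at this
      linarith
    rw [h, Int.fract_sub_intCast]
  rw [hfr]
  set y := Int.fract x with hy
  have hy0 : 0 ≤ y := Int.fract_nonneg x
  have hy1 : y < 1 := Int.fract_lt_one x
  have hmT : Measurable fun t : ℝ => Int.fract (y - t) :=
    measurable_fract.comp (measurable_const.sub measurable_id)
  have hdisj : Disjoint (Icc (0:ℝ) y) (Ioo y 1) := by
    rw [Set.disjoint_left]
    rintro t ⟨_, h1⟩ ⟨h2, _⟩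
    linarith
  have hsplit : volume.restrict (Set.Ico (0:ℝ) 1) =
      volume.restrict (Icc 0 y) + volume.restrict (Ioo y 1) := by
    rw [← Measure.restrict_union hdisj measurableSet_Ioo, Icc_union_Ioo_eq_Ico hy0 hy1]
  have h1 : Measure.map (fun t : ℝ => Int.fract (y - t)) (volume.restrict (Icc 0 y)) =
      volume.restrict (Icc 0 y) := by
    have hcong : (fun t : ℝ => Int.fract (y - t)) =ᵐ[volume.restrict (Icc 0 y)]
        (fun t : ℝ => y - t) := by
      filter_upwards [ae_restrict_mem measurableSet_Icc] with t ht
      exact Int.fract_eq_self.2 ⟨by linarith [ht.1, ht.2], by linarith [ht.1, ht.2]⟩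
    rw [Measure.map_congr hcong]
    have hrm := Measure.restrict_map (μ := volume)
      (by fun_prop : Measurable fun t : ℝ => y - t)
      (measurableSet_Icc (a := (0:ℝ)) (b := y))
    rw [(Measure.measurePreserving_sub_left volume y).map_eq, Set.preimage_const_sub_Icc] at hrm
    simpa using hrm.symm
  have h2 : Measure.map (fun t : ℝ => Int.fract (y - t)) (volume.restrict (Ioo y 1)) =
      volume.restrict (Ioo y 1) := by
    have hcong : (fun t : ℝ => Int.fract (y - t)) =ᵐ[volume.restrict (Ioo y 1)]
        (fun t : ℝ => (y + 1) - t) := by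
      filter_upwards [ae_restrict_mem measurableSet_Ioo] with t ht
      have : Int.fract (y - t) = Int.fract (y - t + 1) := (Int.fract_add_one _).symm
      rw [this, Int.fract_eq_self.2 ⟨by linarith [ht.1, ht.2], by linarith [ht.1, ht.2]⟩]
      ring
    rw [Measure.map_congr hcong]
    have hrm := Measure.restrict_map (μ := volume)
      (by fun_prop : Measurable fun t : ℝ => (y + 1) - t)
      (measurableSet_Ioo (a := y) (b := (1:ℝ)))
    rw [(Measure.measurePreserving_sub_left volume (y + 1)).map_eq,
      Set.preimage_const_sub_Ioo] at hrm
    simpa using hrm.symm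
  rw [hsplit, Measure.map_add _ _ hmT, h1, h2]

lemma lintegral_fract (x : ℝ) {f : ℝ → ENNReal} (hf : Measurable f) :
    ∫⁻ t, f (Int.fract (x - t)) ∂(volume.restrict (Set.Ico (0:ℝ) 1)) =
      ∫⁻ t, f t ∂(volume.restrict (Set.Ico (0:ℝ) 1)) := by
  calc ∫⁻ t, f (Int.fract (x - t)) ∂(volume.restrict (Set.Ico (0:ℝ) 1))
      = ∫⁻ t, f t ∂(Measure.map (fun t : ℝ => Int.fract (x - t))
          (volume.restrict (Set.Ico (0:ℝ) 1))) :=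
        (lintegral_map hf (measurable_fract.comp (measurable_const.sub measurable_id))).symm
    _ = ∫⁻ t, f t ∂(volume.restrict (Set.Ico (0:ℝ) 1)) := by rw [map_fract_const_sub]

lemma measure_fract_gt (x b : ℝ) (hb0 : 0 ≤ b) :
    (volume.restrict (Set.Ico (0:ℝ) 1)) {t : ℝ | b < Int.fract (x - t)} =
      ENNReal.ofReal (1 - b) := by
  have hT : Measurable fun t : ℝ => Int.fract (x - t) :=
    measurable_fract.comp (measurable_const.sub measurable_id)
  have h : {t : ℝ | b < Int.fract (x - t)} = (fun t : ℝ => Int.fract (x - t)) ⁻¹' Ioi b := rfl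
  rw [h, ← Measure.map_apply hT measurableSet_Ioi, map_fract_const_sub,
    Measure.restrict_apply measurableSet_Ioi]
  have h2 : Ioi b ∩ Ico (0:ℝ) 1 = Ioo b 1 := by
    ext t
    constructor
    · rintro ⟨h1, _, h3⟩; exact ⟨h1, h3⟩
    · rintro ⟨h1, h3⟩; exact ⟨h1, le_trans hb0 h1.le, h3⟩
  rw [h2, Real.volume_Ioo]

lemma key_iff {cu cv : ℝ} (hcu : 0 < cu) (hcv : 0 < cv) {a b : ℝ}
    (ha0 : 0 ≤ a) (ha1 : a < 1) (hb0 : 0 ≤ b) (hb1 : b < 1) :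
    ((1 / cu) * (-Real.log (1 - a)) < (1 / cv) * (-Real.log (1 - b)) ↔
      1 - (1 - a) ^ (cv / cu) < b) := by
  have hA : 0 < 1 - a := by linarith
  have hB : 0 < 1 - b := by linarith
  have h1 : ((1 / cu) * (-Real.log (1 - a)) < (1 / cv) * (-Real.log (1 - b)) ↔
      Real.log (1 - b) < (cv / cu) * Real.log (1 - a)) := by
    rw [one_div_mul_eq_div, one_div_mul_eq_div, div_lt_div_iff₀ hcu hcv,
      div_mul_eq_mul_div, lt_div_iff₀ hcu]
    constructor <;> intro h <;> nlinarith
  rw [h1, ← Real.log_rpow hA, Real.log_lt_log_iff hB (Real.rpow_pos_of_pos hA _)]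
  constructor <;> intro h <;> linarith

lemma prod_rpow_sum {ι : Type*} [DecidableEq ι] (s : Finset ι) {z : ℝ} (hz : 0 < z) (K : ι → ℝ) :
    ∏ w ∈ s, z ^ (K w) = z ^ (∑ w ∈ s, K w) := by
  induction s using Finset.induction_on with
  | empty => simp
  | insert a s h ih =>
    rw [Finset.prod_insert h, Finset.sum_insert h, ih, ← Real.rpow_add hz]

lemma lint_pow {K : ℝ} (hK : 0 ≤ K) :
    ∫⁻ b, ENNReal.ofReal ((1 - b) ^ K) ∂(volume.restrict (Set.Ico (0:ℝ) 1)) =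
      ENNReal.ofReal (1 / (K + 1)) := by
  have hm : Measurable fun b : ℝ => (1 - b) ^ K := by fun_prop
  haveI : IsFiniteMeasure (volume.restrict (Set.Ico (0:ℝ) 1)) :=
    ⟨by rw [Measure.restrict_apply_univ, Real.volume_Ico]; simp⟩
  have hint : Integrable (fun b : ℝ => (1 - b) ^ K) (volume.restrict (Set.Ico (0:ℝ) 1)) := by
    refine Integrable.mono' (integrable_const 1) hm.aestronglyMeasurable ?_
    filter_upwards [ae_restrict_mem measurableSet_Ico] with b hb
    rw [Real.norm_eq_abs, abs_of_nonneg (Real.rpow_nonneg (by linarith [hb.2]) _)]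
    exact Real.rpow_le_one (by linarith [hb.2]) (by linarith [hb.1]) hK
  have hnn : 0 ≤ᵐ[volume.restrict (Set.Ico (0:ℝ) 1)] fun b : ℝ => (1 - b) ^ K := by
    filter_upwards [ae_restrict_mem measurableSet_Ico] with b hb
    exact Real.rpow_nonneg (by linarith [hb.2]) _
  rw [← ofReal_integral_eq_lintegral_ofReal hint hnn]
  congr 1
  have h1 : ∫ b in Set.Ico (0:ℝ) 1, (1 - b) ^ K = ∫ b in (0:ℝ)..1, (1 - b) ^ K := by
    rw [intervalIntegral.integral_of_le zero_le_one,
      Measure.restrict_congr_set Ico_ae_eq_Ioc]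
  rw [h1, intervalIntegral.integral_comp_sub_left (fun y : ℝ => y ^ K) 1]
  norm_num
  rw [integral_rpow (Or.inl (by linarith))]
  rw [Real.one_rpow, Real.zero_rpow (by linarith)]
  norm_num

lemma pi_slice {V : Type*} [Fintype V] [DecidableEq V] (c : V → ℝ) (cpos : ∀ v, 0 < c v)
    (u : V) (x : ℝ) :
    (Measure.pi fun _ : V => volume.restrict (Set.Ico (0:ℝ) 1))
      {h : V → ℝ | ∀ v : V, v ≠ u →
        1 - (1 - Int.fract (x - h u)) ^ (c v / c u) < Int.fract (x - h v)} =
      ENNReal.ofReal (c u / ∑ v : V, c v) := by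
  letI : Unique {v : V // v = u} := ⟨⟨⟨u, rfl⟩⟩, fun a => Subtype.ext a.2⟩
  letI : Fintype {v : V // v = u} := Unique.fintype
  set μr := volume.restrict (Set.Ico (0:ℝ) 1) with hμr
  set e : (V → ℝ) ≃ᵐ ({v : V // v = u} → ℝ) × ({v : V // ¬ v = u} → ℝ) :=
    MeasurableEquiv.piEquivPiSubtypeProd (fun _ : V => ℝ) (fun v => v = u) with he
  have mp := measurePreserving_piEquivPiSubtypeProd (fun _ : V => μr) (fun v => v = u)
  set Ks : ℝ := ∑ w : {v : V // ¬ v = u}, c (w : V) / c u with hKs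
  set s : Set (({v : V // v = u} → ℝ) × ({v : V // ¬ v = u} → ℝ)) :=
    {y | ∀ w : {v : V // ¬ v = u},
      1 - (1 - Int.fract (x - y.1 default)) ^ (c (w : V) / c u) < Int.fract (x - y.2 w)} with hs'
  have hfrm : ∀ k : ℝ, Measurable fun z : ℝ => 1 - (1 - z) ^ k := fun k => by fun_prop
  have hs : MeasurableSet s := by
    have : s = ⋂ w : {v : V // ¬ v = u},
        {y : ({v : V // v = u} → ℝ) × ({v : V // ¬ v = u} → ℝ) |
          1 - (1 - Int.fract (x - y.1 default)) ^ (c (w : V) / c u) < Int.fract (x - y.2 w)} := by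
      ext y; simp [hs', Set.mem_iInter]
    rw [this]
    refine MeasurableSet.iInter fun w => measurableSet_lt ?_ ?_
    · exact (hfrm _).comp
        (measurable_fract.comp (measurable_const.sub ((measurable_pi_apply _).comp measurable_fst)))
    · exact measurable_fract.comp (measurable_const.sub ((measurable_pi_apply _).comp measurable_snd))
  have hA : {h : V → ℝ | ∀ v : V, v ≠ u →
      1 - (1 - Int.fract (x - h u)) ^ (c v / c u) < Int.fract (x - h v)} = ⇑e ⁻¹' s := by
    ext h
    simp only [Set.mem_setOf_eq, Set.mem_preimage, he, hs',
      MeasurableEquiv.piEquivPiSubtypeProd, MeasurableEquiv.coe_mk, Equiv.coe_fn_mk,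
      Equiv.piEquivPiSubtypeProd]
    constructor
    · intro H w; exact H w.1 w.2
    · intro H v hv; exact H ⟨v, hv⟩
  rw [hA, mp.measure_preimage hs.nullMeasurableSet]
  have hprod : ∀ a₁ : {v : V // v = u} → ℝ,
      (Measure.pi fun _ : {v : V // ¬ v = u} => μr) (Prod.mk a₁ ⁻¹' s) =
        ENNReal.ofReal ((1 - Int.fract (x - a₁ default)) ^ Ks) := by
    intro a₁
    set a' := Int.fract (x - a₁ default) with ha'
    have ha'0 : 0 ≤ a' := Int.fract_nonneg _
    have ha'1 : a' < 1 := Int.fract_lt_one _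
    have hset : Prod.mk a₁ ⁻¹' s = Set.univ.pi (fun w : {v : V // ¬ v = u} =>
        {t : ℝ | 1 - (1 - a') ^ (c (w : V) / c u) < Int.fract (x - t)}) := by
      ext h₂
      simp [hs', Set.mem_univ_pi, ha']
    rw [hset, Measure.pi_pi]
    have hcoord : ∀ w : {v : V // ¬ v = u},
        μr {t : ℝ | 1 - (1 - a') ^ (c (w : V) / c u) < Int.fract (x - t)} =
          ENNReal.ofReal ((1 - a') ^ (c (w : V) / c u)) := by
      intro w
      have hb0 : 0 ≤ 1 - (1 - a') ^ (c (w : V) / c u) := by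
        have := Real.rpow_le_one (x := 1 - a') (by linarith) (by linarith)
          (le_of_lt (div_pos (cpos w) (cpos u)))
        linarith
      rw [hμr, measure_fract_gt x _ hb0]
      congr 1
      ring
    simp_rw [hcoord]
    rw [← ENNReal.ofReal_prod_of_nonneg (fun w _ => Real.rpow_nonneg (by linarith) _),
      prod_rpow_sum _ (by linarith : (0:ℝ) < 1 - a')]
  rw [Measure.prod_apply hs]
  simp_rw [hprod]
  have hG : Measurable fun t : ℝ => ENNReal.ofReal ((1 - Int.fract (x - t)) ^ Ks) := by
    exact ENNReal.measurable_ofReal.comp ((by fun_prop : Measurable fun z : ℝ => (1 - z) ^ Ks).comp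
      (measurable_fract.comp (measurable_const.sub measurable_id)))
  have hfu : ∫⁻ a₁ : {v : V // v = u} → ℝ,
      ENNReal.ofReal ((1 - Int.fract (x - a₁ default)) ^ Ks)
        ∂(Measure.pi fun _ : {v : V // v = u} => μr) =
      ∫⁻ t, ENNReal.ofReal ((1 - Int.fract (x - t)) ^ Ks) ∂μr :=
    (measurePreserving_funUnique μr _).lintegral_comp hG
  have hKnn : 0 ≤ Ks := Finset.sum_nonneg fun w _ => le_of_lt (div_pos (cpos w) (cpos u))
  rw [show (Subtype.fintype (fun v : V => v = u)) = (Unique.fintype : Fintype {v : V // v = u})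
    from Subsingleton.elim _ _]
  refine Eq.trans hfu ?_
  rw [hμr, lintegral_fract x (by fun_prop : Measurable fun b : ℝ => ENNReal.ofReal ((1 - b) ^ Ks)),
    lint_pow hKnn]
  congr 1
  have hSsub : ∑ w : {v : V // ¬ v = u}, c (w : V) = ∑ v ∈ Finset.univ.erase u, c v :=
    (Finset.sum_subtype (Finset.univ.erase u) (by simp) c).symm
  have hStot : ∑ v : V, c v = c u + ∑ v ∈ Finset.univ.erase u, c v := by
    rw [add_comm, Finset.sum_erase_add _ _ (Finset.mem_univ u)]
  have hKs2 : Ks = (∑ v ∈ Finset.univ.erase u, c v) / c u := by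
    rw [hKs, ← Finset.sum_div, hSsub]
  have hcu : c u ≠ 0 := (cpos u).ne'
  rw [hKs2, div_add_one hcu, one_div_div, hStot, add_comm]

/-- Logarithmic capacity functions
`C_u(x) = (1/c(u)) (-log(1 - ((x - h(u)) mod 1)))`: with node positions and the
data hash i.i.d. uniform on `[0,1)`, the probability that the data element is
assigned to `u` equals `c(u) / ∑_v c(v)`; hence the expected fraction of data
stored at `u` is proportional to its capacity. -/
theorem log_assignment_probability {V : Type*} [Fintype V] [DecidableEq V]
    (c : V → ℝ) (cpos : ∀ v, 0 < c v) (cinj : Function.Injective c) (u : V) :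
    ((Measure.pi fun _ : V => volume.restrict (Set.Ico (0 : ℝ) 1)).prod
        (volume.restrict (Set.Ico (0 : ℝ) 1)))
      {p : (V → ℝ) × ℝ | ∀ v : V, v ≠ u →
        (1 / c u) * (-Real.log (1 - Int.fract (p.2 - p.1 u))) <
          (1 / c v) * (-Real.log (1 - Int.fract (p.2 - p.1 v)))} =
      ENNReal.ofReal (c u / ∑ v : V, c v) := by
  have hset : {p : (V → ℝ) × ℝ | ∀ v : V, v ≠ u →
      (1 / c u) * (-Real.log (1 - Int.fract (p.2 - p.1 u))) <
        (1 / c v) * (-Real.log (1 - Int.fract (p.2 - p.1 v)))} =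
      {p : (V → ℝ) × ℝ | ∀ v : V, v ≠ u →
        1 - (1 - Int.fract (p.2 - p.1 u)) ^ (c v / c u) < Int.fract (p.2 - p.1 v)} := by
    ext p
    simp only [Set.mem_setOf_eq]
    exact forall_congr' fun v => imp_congr_right fun hv =>
      key_iff (cpos u) (cpos v) (Int.fract_nonneg _) (Int.fract_lt_one _)
        (Int.fract_nonneg _) (Int.fract_lt_one _)
  rw [hset]
  have hfrm : ∀ k : ℝ, Measurable fun z : ℝ => 1 - (1 - z) ^ k := fun k => by fun_prop
  have hS : MeasurableSet {p : (V → ℝ) × ℝ | ∀ v : V, v ≠ u →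
      1 - (1 - Int.fract (p.2 - p.1 u)) ^ (c v / c u) < Int.fract (p.2 - p.1 v)} := by
    have h2 : {p : (V → ℝ) × ℝ | ∀ v : V, v ≠ u →
        1 - (1 - Int.fract (p.2 - p.1 u)) ^ (c v / c u) < Int.fract (p.2 - p.1 v)} =
        ⋂ v : V, ⋂ (_ : v ≠ u), {p : (V → ℝ) × ℝ |
          1 - (1 - Int.fract (p.2 - p.1 u)) ^ (c v / c u) < Int.fract (p.2 - p.1 v)} := by
      ext p; simp [Set.mem_iInter]
    rw [h2]
    refine MeasurableSet.iInter fun v => MeasurableSet.iInter fun hv => measurableSet_lt ?_ ?_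
    · exact (hfrm _).comp (measurable_fract.comp
        (measurable_snd.sub ((measurable_pi_apply u).comp measurable_fst)))
    · exact measurable_fract.comp
        (measurable_snd.sub ((measurable_pi_apply v).comp measurable_fst))
  rw [Measure.prod_apply_symm hS]
  have hslice : ∀ x : ℝ,
      (Measure.pi fun _ : V => volume.restrict (Set.Ico (0 : ℝ) 1))
        ((fun h : V → ℝ => (h, x)) ⁻¹' {p : (V → ℝ) × ℝ | ∀ v : V, v ≠ u →
          1 - (1 - Int.fract (p.2 - p.1 u)) ^ (c v / c u) < Int.fract (p.2 - p.1 v)}) =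
      ENNReal.ofReal (c u / ∑ v : V, c v) := fun x => pi_slice c cpos u x
  simp_rw [hslice]
  rw [lintegral_const, Measure.restrict_apply_univ, Real.volume_Ico]
  norm_num
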